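/- Let k ≥ 7 and let H be a graph obtained from the cycle C_k by attaching to each cycle vertex at most one new pendant vertex (a new vertex of degree 1 adjacent only to that cycle vertex). Then KB(H) is isomorphic to KB(C_k). -/

import Mathlib

open SimpleGraph

variable {V : Type}

/-- `B1`, `B2` are the two (nonempty) parts of an induced complete bipartite subgraph:
they are disjoint, each part is independent, and all edges between the parts are present. -/
def IsCBP (H : SimpleGraph V) (B1 B2 : Set V) : Prop :=
  B1.Nonempty ∧ B2.Nonempty ∧ Disjoint B1 B2 ∧
    (∀ a ∈ B1, ∀ b ∈ B1, ¬H.Adj a b) ∧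
    (∀ a ∈ B2, ∀ b ∈ B2, ¬H.Adj a b) ∧
    (∀ a ∈ B1, ∀ b ∈ B2, H.Adj a b)

/-- A set of vertices inducing a complete bipartite subgraph `K_{m,n}`, `m, n ≥ 1`. -/
def IsCompleteBipartiteSet (H : SimpleGraph V) (S : Set V) : Prop :=
  ∃ B1 B2 : Set V, IsCBP H B1 B2 ∧ B1 ∪ B2 = S

/-- A biclique: a maximal set of vertices inducing a complete bipartite subgraph. -/
def IsBiclique (H : SimpleGraph V) (S : Set V) : Prop :=
  IsCompleteBipartiteSet H S ∧
    ∀ T : Set V, IsCompleteBipartiteSet H T → S ⊆ T → S = T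

/-- The biclique graph `KB(H)`: the intersection graph of the bicliques of `H`. -/
def KB (H : SimpleGraph V) : SimpleGraph {S : Set V // IsBiclique H S} :=
  SimpleGraph.fromRel fun A B => (A.1 ∩ B.1).Nonempty

/-- The cycle `C_k` on vertex set `ZMod k`, `i` adjacent to `j` iff `i - j ≡ ±1 (mod k)`. -/
def cycle (k : ℕ) : SimpleGraph (ZMod k) :=
  SimpleGraph.fromRel fun i j => i = j + 1

/-- The graph obtained from `C_k` by attaching, to each cycle vertex `i ∈ P`, one new
pendant vertex `Sum.inr ⟨i, _⟩` adjacent only to `i` (so each cycle vertex gets at most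
one pendant). -/
def pendantCycle (k : ℕ) (P : Set (ZMod k)) : SimpleGraph (ZMod k ⊕ P) :=
  SimpleGraph.fromRel fun p q =>
    match p, q with
    | Sum.inl i, Sum.inl j => i = j + 1
    | Sum.inl i, Sum.inr j => i = j.1
    | _, _ => False


section Work

variable {k : ℕ} {P : Set (ZMod k)}

lemma zmod_ne (hk : 7 ≤ k) {n : ℕ} (h0 : 0 < n) (h7 : n < 7) : (n : ZMod k) ≠ 0 := by
  haveI : NeZero k := ⟨by omega⟩
  intro h
  rw [ZMod.natCast_eq_zero_iff] at h
  have := Nat.le_of_dvd h0 h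
  omega

lemma cyc_adj {i j : ZMod k} : (cycle k).Adj i j ↔ i ≠ j ∧ (i = j + 1 ∨ j = i + 1) := by
  simp [cycle, SimpleGraph.fromRel_adj]

lemma pc_ll {i j : ZMod k} : (pendantCycle k P).Adj (.inl i) (.inl j) ↔ i ≠ j ∧ (i = j + 1 ∨ j = i + 1) := by
  simp [pendantCycle, SimpleGraph.fromRel_adj]

lemma pc_lr {i : ZMod k} {p : P} : (pendantCycle k P).Adj (.inl i) (.inr p) ↔ i = p.1 := by
  simp [pendantCycle, SimpleGraph.fromRel_adj]

lemma pc_rr {p q : P} : ¬ (pendantCycle k P).Adj (.inr p) (.inr q) := by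
  simp [pendantCycle, SimpleGraph.fromRel_adj]

section
variable (hk : 7 ≤ k)
include hk

lemma z1 : (1 : ZMod k) ≠ 0 := by
  have := zmod_ne hk (n := 1) (by norm_num) (by norm_num); simpa using this
lemma z2 : (2 : ZMod k) ≠ 0 := by
  have := zmod_ne hk (n := 2) (by norm_num) (by norm_num); simpa using this
lemma z3 : (3 : ZMod k) ≠ 0 := by
  have := zmod_ne hk (n := 3) (by norm_num) (by norm_num); simpa using this
lemma z4 : (4 : ZMod k) ≠ 0 := by
  have := zmod_ne hk (n := 4) (by norm_num) (by norm_num); simpa using this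

/-- in `C_k` (at the `ZMod` level), two distinct vertices have at most one common
neighbour -/
lemma common_z {u v w w' : ZMod k} (huv : u ≠ v)
    (hw : (w = u - 1 ∨ w = u + 1) ∧ (w = v - 1 ∨ w = v + 1))
    (hw' : (w' = u - 1 ∨ w' = u + 1) ∧ (w' = v - 1 ∨ w' = v + 1)) : w = w' := by
  obtain ⟨hw1, hw2⟩ := hw
  obtain ⟨hw'1, hw'2⟩ := hw'
  rcases hw1 with h1 | h1 <;> rcases hw2 with h2 | h2 <;>
    rcases hw'1 with h3 | h3 <;> rcases hw'2 with h4 | h4 <;>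
    first
      | (exact h1.trans h3.symm)
      | (exact h2.trans h4.symm)
      | (exact absurd (by linear_combination h1 - h2) huv)
      | (exact absurd (by linear_combination h2 - h1) huv)
      | (exact absurd (by linear_combination h3 - h4) huv)
      | (exact absurd (by linear_combination h4 - h3) huv)
      | (exact absurd (show (4 : ZMod k) = 0 by linear_combination h1 - h2 - h3 + h4) (z4 hk))
      | (exact absurd (show (4 : ZMod k) = 0 by linear_combination -h1 + h2 + h3 - h4) (z4 hk))

lemma center_eq {i j : ZMod k}
    (h : ∀ x ∈ ({i - 1, i, i + 1} : Set (ZMod k)), x ∈ ({j - 1, j, j + 1} : Set (ZMod k))) :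
    i = j := by
  have hi := h i (by simp)
  have hp := h (i + 1) (by simp)
  have hm := h (i - 1) (by simp)
  simp only [Set.mem_insert_iff, Set.mem_singleton_iff] at hi hp hm
  rcases hi with hi | hi | hi
  · rcases hm with hm | hm | hm
    · exact absurd (show (1 : ZMod k) = 0 by linear_combination hi - hm) (z1 hk)
    · exact absurd (show (2 : ZMod k) = 0 by linear_combination hi - hm) (z2 hk)
    · exact absurd (show (3 : ZMod k) = 0 by linear_combination hi - hm) (z3 hk)
  · exact hi
  · rcases hp with hp | hp | hp
    · exact absurd (show (3 : ZMod k) = 0 by linear_combination hp - hi) (z3 hk)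
    · exact absurd (show (2 : ZMod k) = 0 by linear_combination hp - hi) (z2 hk)
    · exact absurd (show (1 : ZMod k) = 0 by linear_combination hp - hi) (z1 hk)

end

def starC (i : ZMod k) : Set (ZMod k) := {i - 1, i, i + 1}

def starH (P : Set (ZMod k)) (i : ZMod k) : Set (ZMod k ⊕ P) :=
  Sum.inl '' {i - 1, i, i + 1} ∪ Sum.inr '' {p : P | (p : ZMod k) = i}

lemma mem_starH_inl {i w : ZMod k} :
    Sum.inl w ∈ starH P i ↔ w = i - 1 ∨ w = i ∨ w = i + 1 := by
  simp [starH]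

lemma mem_starH_inr {i : ZMod k} {p : P} :
    (Sum.inr p : ZMod k ⊕ P) ∈ starH P i ↔ (p : ZMod k) = i := by
  simp [starH]

lemma cbp_symm {W : Type} {H : SimpleGraph W} {B1 B2 : Set W} (h : IsCBP H B1 B2) :
    IsCBP H B2 B1 := by
  obtain ⟨a, b, c, d, e, f⟩ := h
  exact ⟨b, a, c.symm, e, d, fun x hx y hy => (f y hy x hx).symm⟩

section
variable (hk : 7 ≤ k)
include hk

lemma cyc_adj' {x y : ZMod k} : (cycle k).Adj x y ↔ x = y - 1 ∨ x = y + 1 := by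
  rw [cyc_adj]
  constructor
  · rintro ⟨hne, h | h⟩
    · exact Or.inr h
    · exact Or.inl (by linear_combination -h)
  · rintro (h | h)
    · exact ⟨fun heq => z1 hk (by linear_combination h - heq), Or.inr (by linear_combination -h)⟩
    · exact ⟨fun heq => z1 hk (by linear_combination heq - h), Or.inl h⟩

lemma pm_ne {i : ZMod k} : i - 1 ≠ i + 1 := fun h => z2 hk (by linear_combination -h)

lemma mid_common {i w : ZMod k}
    (h1 : w = (i - 1) - 1 ∨ w = (i - 1) + 1) (h2 : w = (i + 1) - 1 ∨ w = (i + 1) + 1) :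
    w = i :=
  common_z (u := i - 1) (v := i + 1) (w := w) (w' := i) hk (pm_ne hk) ⟨h1, h2⟩
    ⟨Or.inr (show i = (i - 1) + 1 by ring), Or.inl (show i = (i + 1) - 1 by ring)⟩

lemma starC_cbs (i : ZMod k) : IsCompleteBipartiteSet (cycle k) (starC i) := by
  refine ⟨{i}, {i - 1, i + 1}, ⟨⟨i, rfl⟩, ⟨i - 1, by simp⟩, ?_, ?_, ?_, ?_⟩, ?_⟩
  · rw [Set.disjoint_left]
    rintro a ha hb
    simp only [Set.mem_singleton_iff] at ha
    subst ha
    simp only [Set.mem_insert_iff, Set.mem_singleton_iff] at hb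
    rcases hb with h | h
    · exact z1 hk (by linear_combination h)
    · exact z1 hk (by linear_combination -h)
  · rintro a ha b hb hadj
    simp only [Set.mem_singleton_iff] at ha hb
    subst ha; subst hb
    exact (cyc_adj.mp hadj).1 rfl
  · rintro a ha b hb hadj
    obtain ⟨hne, h⟩ := cyc_adj.mp hadj
    simp only [Set.mem_insert_iff, Set.mem_singleton_iff] at ha hb
    rcases ha with rfl | rfl <;> rcases hb with rfl | rfl
    · exact hne rfl
    · rcases h with h | h
      · exact z3 hk (by linear_combination -h)
      · exact z1 hk (by linear_combination h)
    · rcases h with h | h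
      · exact z1 hk (by linear_combination h)
      · exact z3 hk (by linear_combination -h)
    · exact hne rfl
  · rintro a ha b hb
    simp only [Set.mem_singleton_iff] at ha
    subst ha
    simp only [Set.mem_insert_iff, Set.mem_singleton_iff] at hb
    rw [cyc_adj' hk]
    rcases hb with rfl | rfl
    · exact Or.inr (show a = (a - 1) + 1 by ring)
    · exact Or.inl (show a = (a + 1) - 1 by ring)
  · ext x
    simp only [starC, Set.mem_union, Set.mem_insert_iff, Set.mem_singleton_iff]
    tauto

lemma starC_max_aux {i : ZMod k} {T1 T2 : Set (ZMod k)} (hcbp : IsCBP (cycle k) T1 T2)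
    (hi : i ∈ T1) (hsub : starC i ⊆ T1 ∪ T2) : T1 ∪ T2 ⊆ starC i := by
  obtain ⟨-, -, -, hind1, -, hadj⟩ := hcbp
  have hself : (cycle k).Adj i (i + 1) := (cyc_adj' hk).mpr (Or.inl (show i = (i + 1) - 1 by ring))
  have hselfm : (cycle k).Adj i (i - 1) := (cyc_adj' hk).mpr (Or.inr (show i = (i - 1) + 1 by ring))
  have hp : i + 1 ∈ T2 := by
    rcases hsub (show i + 1 ∈ starC i by simp [starC]) with h | h
    · exact absurd hself (hind1 i hi (i + 1) h)
    · exact h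
  have hm : i - 1 ∈ T2 := by
    rcases hsub (show i - 1 ∈ starC i by simp [starC]) with h | h
    · exact absurd hselfm (hind1 i hi (i - 1) h)
    · exact h
  rintro x (hx | hx)
  · have h1 := (cyc_adj' hk).mp (hadj x hx (i - 1) hm)
    have h2 := (cyc_adj' hk).mp (hadj x hx (i + 1) hp)
    have : x = i := mid_common hk h1 h2
    simp [starC, this]
  · have h := (cyc_adj' hk).mp ((hadj i hi x hx).symm)
    simp only [starC, Set.mem_insert_iff, Set.mem_singleton_iff]
    tauto

lemma starC_biclique (i : ZMod k) : IsBiclique (cycle k) (starC i) := by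
  refine ⟨starC_cbs hk i, ?_⟩
  rintro T ⟨T1, T2, hcbp, rfl⟩ hsub
  apply Set.Subset.antisymm hsub
  rcases hsub (show i ∈ starC i by simp [starC]) with hi | hi
  · exact starC_max_aux hk hcbp hi hsub
  · have := starC_max_aux hk (cbp_symm hcbp) hi (by rwa [Set.union_comm])
    rwa [Set.union_comm]

lemma biclique_cycle {S : Set (ZMod k)} (hS : IsBiclique (cycle k) S) :
    ∃ i, S = starC i := by
  obtain ⟨⟨B1, B2, hcbp, rfl⟩, hmax⟩ := hS
  obtain ⟨hne1, hne2, -, -, -, hadj⟩ := hcbp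
  have key : B1.Subsingleton ∨ B2.Subsingleton := by
    by_contra hcon
    push_neg at hcon
    obtain ⟨h1, h2⟩ := hcon
    unfold Set.Nontrivial at h1 h2
    obtain ⟨a, ha, a', ha', haa⟩ := h1
    obtain ⟨b, hb, b', hb', hbb⟩ := h2
    exact haa (common_z hk hbb
      ⟨(cyc_adj' hk).mp (hadj a ha b hb), (cyc_adj' hk).mp (hadj a ha b' hb')⟩
      ⟨(cyc_adj' hk).mp (hadj a' ha' b hb), (cyc_adj' hk).mp (hadj a' ha' b' hb')⟩)
  rcases key with hss | hss
  · obtain ⟨v, hv⟩ := hne1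
    refine ⟨v, hmax (starC v) (starC_cbs hk v) ?_⟩
    rintro x (hx | hx)
    · have : x = v := hss hx hv
      simp [starC, this]
    · have h := (cyc_adj' hk).mp ((hadj v hv x hx).symm)
      simp only [starC, Set.mem_insert_iff, Set.mem_singleton_iff]
      tauto
  · obtain ⟨v, hv⟩ := hne2
    refine ⟨v, hmax (starC v) (starC_cbs hk v) ?_⟩
    rintro x (hx | hx)
    · have h := (cyc_adj' hk).mp (hadj x hx v hv)
      simp only [starC, Set.mem_insert_iff, Set.mem_singleton_iff]
      tauto
    · have : x = v := hss hx hv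
      simp [starC, this]

lemma starC_inj {i j : ZMod k} (h : starC i = starC j) : i = j := by
  apply center_eq hk
  intro x hx
  have : x ∈ starC j := h ▸ hx
  simpa [starC] using this

end

section
set_option linter.unusedSectionVars false
variable (hk : 7 ≤ k)

lemma pc_rl {u : ZMod k} {q : P} :
    (pendantCycle k P).Adj (.inr q) (.inl u) ↔ u = q.1 := by
  simp [pendantCycle, SimpleGraph.fromRel_adj]

include hk

lemma pc_ll' {w u : ZMod k} :
    (pendantCycle k P).Adj (.inl w) (.inl u) ↔ w = u - 1 ∨ w = u + 1 := by
  rw [pc_ll, ← cyc_adj, cyc_adj' hk]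

lemma pc_nbr {i : ZMod k} {x : ZMod k ⊕ P} :
    (pendantCycle k P).Adj (.inl i) x ↔
      x = Sum.inl (i - 1) ∨ x = Sum.inl (i + 1) ∨ ∃ p : P, (p : ZMod k) = i ∧ x = Sum.inr p := by
  cases x with
  | inl w =>
    rw [show (pendantCycle k P).Adj (.inl i) (.inl w) ↔ (pendantCycle k P).Adj (.inl w) (.inl i)
        from ⟨Adj.symm, Adj.symm⟩, pc_ll' hk]
    constructor
    · rintro (h | h)
      · exact Or.inl (by rw [h])
      · exact Or.inr (Or.inl (by rw [h]))
    · rintro (h | h | ⟨q, hq, hq2⟩)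
      · rw [Sum.inl.injEq] at h
        exact Or.inl h
      · rw [Sum.inl.injEq] at h
        exact Or.inr h
      · exact absurd hq2 (by simp)
  | inr p =>
    rw [pc_lr]
    constructor
    · intro h
      exact Or.inr (Or.inr ⟨p, h.symm, rfl⟩)
    · rintro (h | h | ⟨q, hq, hq2⟩)
      · exact absurd h (by simp)
      · exact absurd h (by simp)
      · rw [Sum.inr.injEq] at hq2
        subst hq2
        exact hq.symm

omit hk in
lemma pc_pendant {x : ZMod k ⊕ P} {p : P} :
    (pendantCycle k P).Adj x (Sum.inr p) ↔ x = Sum.inl (p : ZMod k) := by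
  cases x with
  | inl w => rw [pc_lr]; simp
  | inr q =>
    simp only [reduceCtorEq, iff_false]
    exact pc_rr

lemma common_H {b b' x y : ZMod k ⊕ P} (hbb' : b ≠ b')
    (hxb : (pendantCycle k P).Adj x b) (hxb' : (pendantCycle k P).Adj x b')
    (hyb : (pendantCycle k P).Adj y b) (hyb' : (pendantCycle k P).Adj y b') : x = y := by
  cases b with
  | inr p =>
    rw [pc_pendant] at hxb hyb
    exact hxb.trans hyb.symm
  | inl u =>
    cases b' with
    | inr p =>
      rw [pc_pendant] at hxb' hyb'
      exact hxb'.trans hyb'.symm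
    | inl v =>
      have huv : u ≠ v := fun h => hbb' (by rw [h])
      cases x with
      | inr q =>
        rw [pc_rl] at hxb hxb'
        exact absurd (hxb.trans hxb'.symm) huv
      | inl w =>
        cases y with
        | inr q =>
          rw [pc_rl] at hyb hyb'
          exact absurd (hyb.trans hyb'.symm) huv
        | inl w' =>
          rw [pc_ll' hk] at hxb hxb' hyb hyb'
          rw [common_z hk huv ⟨hxb, hxb'⟩ ⟨hyb, hyb'⟩]

lemma starH_cbs (i : ZMod k) : IsCompleteBipartiteSet (pendantCycle k P) (starH P i) := by
  refine ⟨{Sum.inl i}, Sum.inl '' {i - 1, i + 1} ∪ Sum.inr '' {p : P | (p : ZMod k) = i},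
    ⟨⟨Sum.inl i, rfl⟩, ⟨Sum.inl (i - 1), by simp⟩, ?_, ?_, ?_, ?_⟩, ?_⟩
  · rw [Set.disjoint_left]
    rintro a ha hb
    simp only [Set.mem_singleton_iff] at ha
    subst ha
    simp only [Set.mem_union, Set.mem_image, Set.mem_insert_iff, Set.mem_singleton_iff,
      Set.mem_setOf_eq] at hb
    rcases hb with ⟨w, hw, hweq⟩ | ⟨p, -, hpeq⟩
    · rw [Sum.inl.injEq] at hweq
      rcases hw with rfl | rfl
      · exact z1 hk (by linear_combination -hweq)
      · exact z1 hk (by linear_combination hweq)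
    · exact absurd hpeq (by simp)
  · rintro a ha b hb hadj
    simp only [Set.mem_singleton_iff] at ha hb
    subst ha; subst hb
    exact (pendantCycle k P).loopless.irrefl _ hadj
  · rintro a ha b hb hadj
    simp only [Set.mem_union, Set.mem_image, Set.mem_insert_iff, Set.mem_singleton_iff,
      Set.mem_setOf_eq] at ha hb
    rcases ha with ⟨w, hw, rfl⟩ | ⟨p, hp, rfl⟩ <;> rcases hb with ⟨w', hw', rfl⟩ | ⟨q, hq, rfl⟩
    · rw [pc_ll' hk] at hadj
      rcases hw with rfl | rfl <;> rcases hw' with rfl | rfl <;> rcases hadj with h | h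
      · exact z1 hk (by linear_combination h)
      · exact z1 hk (by linear_combination -h)
      · exact z1 hk (by linear_combination -h)
      · exact z3 hk (by linear_combination -h)
      · exact z3 hk (by linear_combination h)
      · exact z1 hk (by linear_combination h)
      · exact z1 hk (by linear_combination h)
      · exact z1 hk (by linear_combination -h)
    · rw [pc_lr] at hadj
      rw [hq] at hadj
      rcases hw with rfl | rfl
      · exact z1 hk (by linear_combination -hadj)
      · exact z1 hk (by linear_combination hadj)
    · rw [pc_rl] at hadj
      rw [hp] at hadj
      rcases hw' with rfl | rfl
      · exact z1 hk (by linear_combination -hadj)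
      · exact z1 hk (by linear_combination hadj)
    · exact pc_rr hadj
  · rintro a ha b hb
    simp only [Set.mem_singleton_iff] at ha
    subst ha
    simp only [Set.mem_union, Set.mem_image, Set.mem_insert_iff, Set.mem_singleton_iff,
      Set.mem_setOf_eq] at hb
    rw [pc_nbr hk]
    rcases hb with ⟨w, hw, rfl⟩ | ⟨p, hp, rfl⟩
    · rcases hw with rfl | rfl
      · exact Or.inl rfl
      · exact Or.inr (Or.inl rfl)
    · exact Or.inr (Or.inr ⟨p, hp, rfl⟩)
  · rw [starH, show ({i - 1, i, i + 1} : Set (ZMod k)) = insert i {i - 1, i + 1} from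
      Set.insert_comm _ _ _, Set.image_insert_eq, Set.singleton_union, Set.insert_union]
    simp [Set.image_insert_eq, Set.insert_union]

omit hk in
lemma mem_starH_self (i : ZMod k) : Sum.inl i ∈ starH P i := by
  simp [starH]

lemma starH_max_aux {i : ZMod k} {T1 T2 : Set (ZMod k ⊕ P)}
    (hcbp : IsCBP (pendantCycle k P) T1 T2) (hi : Sum.inl i ∈ T1)
    (hsub : starH P i ⊆ T1 ∪ T2) : T1 ∪ T2 ⊆ starH P i := by
  obtain ⟨-, -, -, hind1, -, hadj⟩ := hcbp
  have hself : (pendantCycle k P).Adj (.inl i) (.inl (i + 1)) :=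
    (pc_ll' hk).mpr (Or.inl (show i = (i + 1) - 1 by ring))
  have hselfm : (pendantCycle k P).Adj (.inl i) (.inl (i - 1)) :=
    (pc_ll' hk).mpr (Or.inr (show i = (i - 1) + 1 by ring))
  have hp : Sum.inl (i + 1) ∈ T2 := by
    rcases hsub (show Sum.inl (i + 1) ∈ starH P i from (mem_starH_inl).mpr (by tauto)) with h | h
    · exact absurd hself (hind1 _ hi _ h)
    · exact h
  have hm : Sum.inl (i - 1) ∈ T2 := by
    rcases hsub (show Sum.inl (i - 1) ∈ starH P i from (mem_starH_inl).mpr (by tauto)) with h | h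
    · exact absurd hselfm (hind1 _ hi _ h)
    · exact h
  rintro x (hx | hx)
  · have h1 := hadj x hx _ hm
    have h2 := hadj x hx _ hp
    cases x with
    | inr q =>
      rw [pc_rl] at h1 h2
      exact absurd (show (2 : ZMod k) = 0 by linear_combination h2 - h1) (z2 hk)
    | inl w =>
      rw [pc_ll' hk] at h1 h2
      have : w = i := mid_common hk h1 h2
      subst this
      exact mem_starH_self w
  · have h := (pc_nbr hk).mp (hadj _ hi x hx)
    rcases h with rfl | rfl | ⟨p, hp1, rfl⟩
    · exact mem_starH_inl.mpr (Or.inl rfl)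
    · exact mem_starH_inl.mpr (Or.inr (Or.inr rfl))
    · exact mem_starH_inr.mpr hp1

lemma starH_biclique (i : ZMod k) : IsBiclique (pendantCycle k P) (starH P i) := by
  refine ⟨starH_cbs hk i, ?_⟩
  rintro T ⟨T1, T2, hcbp, rfl⟩ hsub
  apply Set.Subset.antisymm hsub
  rcases hsub (mem_starH_self i) with hi | hi
  · exact starH_max_aux hk hcbp hi hsub
  · have := starH_max_aux hk (cbp_symm hcbp) hi (by rwa [Set.union_comm])
    rwa [Set.union_comm]

lemma biclique_pendant {S : Set (ZMod k ⊕ P)} (hS : IsBiclique (pendantCycle k P) S) :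
    ∃ i, S = starH P i := by
  obtain ⟨⟨B1, B2, hcbp, rfl⟩, hmax⟩ := hS
  obtain ⟨hne1, hne2, -, -, -, hadj⟩ := hcbp
  have key : B1.Subsingleton ∨ B2.Subsingleton := by
    by_contra hcon
    push_neg at hcon
    obtain ⟨h1, h2⟩ := hcon
    unfold Set.Nontrivial at h1 h2
    obtain ⟨a, ha, a', ha', haa⟩ := h1
    obtain ⟨b, hb, b', hb', hbb⟩ := h2
    exact haa (common_H hk hbb (hadj a ha b hb) (hadj a ha b' hb')
      (hadj a' ha' b hb) (hadj a' ha' b' hb'))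
  rcases key with hss | hss
  · obtain ⟨v, hv⟩ := hne1
    have hB1 : B1 = {v} := hss.eq_singleton_of_mem hv
    cases v with
    | inl u =>
      refine ⟨u, hmax (starH P u) (starH_cbs hk u) ?_⟩
      rintro x (hx | hx)
      · rw [hB1] at hx
        simp only [Set.mem_singleton_iff] at hx
        subst hx
        exact mem_starH_self u
      · rcases (pc_nbr hk).mp (hadj _ hv x hx) with rfl | rfl | ⟨p, hp1, rfl⟩
        · exact mem_starH_inl.mpr (Or.inl rfl)
        · exact mem_starH_inl.mpr (Or.inr (Or.inr rfl))
        · exact mem_starH_inr.mpr hp1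
    | inr p =>
      refine ⟨(p : ZMod k), hmax (starH P _) (starH_cbs hk _) ?_⟩
      rintro x (hx | hx)
      · rw [hB1] at hx
        simp only [Set.mem_singleton_iff] at hx
        subst hx
        exact mem_starH_inr.mpr rfl
      · have := (pc_pendant).mp (hadj _ hv x hx).symm
        subst this
        exact mem_starH_inl.mpr (Or.inr (Or.inl rfl))
  · obtain ⟨v, hv⟩ := hne2
    have hB2 : B2 = {v} := hss.eq_singleton_of_mem hv
    cases v with
    | inl u =>
      refine ⟨u, hmax (starH P u) (starH_cbs hk u) ?_⟩
      rintro x (hx | hx)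
      · rcases (pc_nbr hk).mp (hadj x hx _ hv).symm with rfl | rfl | ⟨p, hp1, rfl⟩
        · exact mem_starH_inl.mpr (Or.inl rfl)
        · exact mem_starH_inl.mpr (Or.inr (Or.inr rfl))
        · exact mem_starH_inr.mpr hp1
      · rw [hB2] at hx
        simp only [Set.mem_singleton_iff] at hx
        subst hx
        exact mem_starH_self u
    | inr p =>
      refine ⟨(p : ZMod k), hmax (starH P _) (starH_cbs hk _) ?_⟩
      rintro x (hx | hx)
      · have := (pc_pendant).mp (hadj x hx _ hv)
        subst this
        exact mem_starH_inl.mpr (Or.inr (Or.inl rfl))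
      · rw [hB2] at hx
        simp only [Set.mem_singleton_iff] at hx
        subst hx
        exact mem_starH_inr.mpr rfl

lemma starH_inj {i j : ZMod k} (h : starH P i = starH P j) : i = j := by
  apply center_eq hk
  intro x hx
  have : Sum.inl x ∈ starH P j := h ▸ (mem_starH_inl.mpr (by simpa using hx))
  simpa using mem_starH_inl.mp this

omit hk in
lemma inter_iff {i j : ZMod k} :
    ((starH P i) ∩ (starH P j)).Nonempty ↔ ((starC i) ∩ (starC j)).Nonempty := by
  constructor
  · rintro ⟨x, hxi, hxj⟩
    cases x with
    | inl w =>
      exact ⟨w, by simpa [starC] using mem_starH_inl.mp hxi,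
        by simpa [starC] using mem_starH_inl.mp hxj⟩
    | inr p =>
      have h1 := mem_starH_inr.mp hxi
      have h2 := mem_starH_inr.mp hxj
      refine ⟨i, by simp [starC], ?_⟩
      rw [← h1.symm.trans h2]
      simp [starC]
  · rintro ⟨w, h1, h2⟩
    exact ⟨Sum.inl w, mem_starH_inl.mpr (by simpa [starC] using h1),
      mem_starH_inl.mpr (by simpa [starC] using h2)⟩

end

end Work

/-- For `k ≥ 7`, attaching at most one pendant vertex to each cycle vertex does not
change the biclique graph: `KB(H) ≅ KB(C_k)`. -/
theorem stmt_14 (k : ℕ) (hk : 7 ≤ k) (P : Set (ZMod k)) :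
    Nonempty (KB (pendantCycle k P) ≃g KB (cycle k)) := by
  have hbH : ∀ i, IsBiclique (pendantCycle k P) (starH P i) := starH_biclique hk
  have hbC : ∀ i, IsBiclique (cycle k) (starC i) := starC_biclique hk
  let fH : ZMod k → {S : Set (ZMod k ⊕ P) // IsBiclique (pendantCycle k P) S} :=
    fun i => ⟨starH P i, hbH i⟩
  let fC : ZMod k → {S : Set (ZMod k) // IsBiclique (cycle k) S} := fun i => ⟨starC i, hbC i⟩
  have bijH : Function.Bijective fH := by
    constructor
    · intro i j h
      exact starH_inj hk (congrArg Subtype.val h)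
    · rintro ⟨S, hS⟩
      obtain ⟨i, rfl⟩ := biclique_pendant hk hS
      exact ⟨i, rfl⟩
  have bijC : Function.Bijective fC := by
    constructor
    · intro i j h
      exact starC_inj hk (congrArg Subtype.val h)
    · rintro ⟨S, hS⟩
      obtain ⟨i, rfl⟩ := biclique_cycle hk hS
      exact ⟨i, rfl⟩
  let EH := Equiv.ofBijective fH bijH
  let EC := Equiv.ofBijective fC bijC
  refine ⟨⟨EH.symm.trans EC, @fun a b => ?_⟩⟩
  obtain ⟨i, rfl⟩ := EH.surjective a
  obtain ⟨j, rfl⟩ := EH.surjective b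
  simp only [Equiv.trans_apply, Equiv.symm_apply_apply]
  rw [show EC i = fC i from rfl, show EC j = fC j from rfl,
    show EH i = fH i from rfl, show EH j = fH j from rfl]
  show (KB (cycle k)).Adj ⟨starC i, hbC i⟩ ⟨starC j, hbC j⟩ ↔
    (KB (pendantCycle k P)).Adj ⟨starH P i, hbH i⟩ ⟨starH P j, hbH j⟩
  simp only [KB, SimpleGraph.fromRel_adj, ne_eq, Subtype.mk.injEq]
  constructor
  · rintro ⟨hne, h⟩
    refine ⟨fun heq => hne (by rw [starH_inj hk heq]), ?_⟩
    rcases h with h | h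
    · exact Or.inl (inter_iff.mpr h)
    · exact Or.inr (inter_iff.mpr h)
  · rintro ⟨hne, h⟩
    refine ⟨fun heq => hne (by rw [starC_inj hk heq]), ?_⟩
    rcases h with h | h
    · exact Or.inl (inter_iff.mp h)
    · exact Or.inr (inter_iff.mp h)
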